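/- Let N ≥ 1, h = 1/N, Δt > 0, β ∈ ℝ, γ > 0, and let n ≥ 1. Suppose m^0, m^1, …, m^n and ṽ^1, …, ṽ^n are grid functions such that |m^0(I)| = 1 for every I and, for each 1 ≤ k ≤ n, (ṽ^k(I) − m^{k−1}(I))/Δt = −β m^{k−1}(I) × (Δ_h ṽ^k)(I) − γ m^{k−1}(I) × (m^{k−1}(I) × (Δ_h ṽ^k)(I)) for every I, and m^k(I) = ṽ^k(I)/|ṽ^k(I)|. Then the unconditional stability bound holds: (1/2)‖∇_h m^n‖_2^2 + γ Δt Σ_{k=1}^{n} h^3 Σ_I | m^{k−1}(I) × (Δ_h ṽ^k)(I) |^2 ≤ (1/2)‖∇_h m^0‖_2^2. -/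

import Mathlib

open scoped BigOperators RealInnerProductSpace

noncomputable section

/-- Euclidean 3-space. -/
abbrev E3 : Type := EuclideanSpace ℝ (Fin 3)

/-- Cross product on `E3`. -/
def cross3 (a b : E3) : E3 :=
  (WithLp.equiv 2 (Fin 3 → ℝ)).symm
    ![a 1 * b 2 - a 2 * b 1, a 2 * b 0 - a 0 * b 2, a 0 * b 1 - a 1 * b 0]

/-- Index set of the triply periodic grid. -/
abbrev Idx (N : ℕ) := Fin 3 → ZMod N

/-- Grid functions. -/
abbrev GridFun (N : ℕ) := Idx N → E3

/-- Forward difference in direction `r`. -/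
def fd {N : ℕ} (h : ℝ) (r : Fin 3) (f : GridFun N) (I : Idx N) : E3 :=
  (1 / h) • (f (I + Pi.single r 1) - f I)

/-- Centered average in direction `r`. -/
def ca {N : ℕ} (r : Fin 3) (f : GridFun N) (I : Idx N) : E3 :=
  ((1 : ℝ) / 2) • (f (I + Pi.single r 1) + f I)

/-- Discrete Laplacian. -/
def dlap {N : ℕ} (h : ℝ) (f : GridFun N) (I : Idx N) : E3 :=
  ∑ r : Fin 3, (1 / h ^ 2) • (f (I + Pi.single r 1) - (2 : ℝ) • f I + f (I - Pi.single r 1))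

/-- Squared discrete `L²` norm. -/
def l2sq {N : ℕ} [NeZero N] (h : ℝ) (f : GridFun N) : ℝ :=
  h ^ 3 * ∑ I : Idx N, ‖f I‖ ^ 2

/-- Squared discrete gradient (`H¹` seminorm). -/
def gradsq {N : ℕ} [NeZero N] (h : ℝ) (f : GridFun N) : ℝ :=
  h ^ 3 * ∑ I : Idx N, ∑ r : Fin 3, ‖fd h r f I‖ ^ 2

/-- Discrete `ℓᵖ` norm, for real `p`. -/
def pnorm {N : ℕ} [NeZero N] (h p : ℝ) (f : GridFun N) : ℝ :=
  (h ^ 3 * ∑ I : Idx N, ‖f I‖ ^ p) ^ (1 / p)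

/-- Discrete `ℓ^∞` norm. -/
def inorm {N : ℕ} [NeZero N] (f : GridFun N) : ℝ :=
  ⨆ I : Idx N, ‖f I‖

/-- Discrete `ℓ^∞` norm of the gradient. -/
def ginorm {N : ℕ} [NeZero N] (h : ℝ) (f : GridFun N) : ℝ :=
  ⨆ I : Idx N, ⨆ r : Fin 3, ‖fd h r f I‖

section AuxLemmas

lemma inner_cross3_self (a b : E3) : ⟪a, cross3 a b⟫ = 0 := by
  simp [cross3, PiLp.inner_apply, Fin.sum_univ_three, WithLp.equiv_symm_apply, PiLp.toLp_apply]
  ring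

lemma inner_cross3_self' (a b : E3) : ⟪cross3 a b, b⟫ = 0 := by
  simp [cross3, PiLp.inner_apply, Fin.sum_univ_three, WithLp.equiv_symm_apply, PiLp.toLp_apply]
  ring

lemma inner_cross3_cross (a b c : E3) : ⟪cross3 a b, c⟫ = - ⟪b, cross3 a c⟫ := by
  simp [cross3, PiLp.inner_apply, Fin.sum_univ_three, WithLp.equiv_symm_apply, PiLp.toLp_apply]
  ring

lemma proj_lip (a b : E3) (ha : 1 ≤ ‖a‖) (hb : 1 ≤ ‖b‖) :
    ‖‖a‖⁻¹ • a - ‖b‖⁻¹ • b‖ ≤ ‖a - b‖ := by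
  have hA : (0:ℝ) < ‖a‖ := lt_of_lt_of_le one_pos ha
  have hB : (0:ℝ) < ‖b‖ := lt_of_lt_of_le one_pos hb
  have ht : ⟪a, b⟫ ≤ ‖a‖ * ‖b‖ := real_inner_le_norm a b
  have h1 : ‖‖a‖⁻¹ • a - ‖b‖⁻¹ • b‖ ^ 2 = 2 - 2 * (⟪a, b⟫ / (‖a‖ * ‖b‖)) := by
    rw [norm_sub_sq_real]
    rw [norm_smul, norm_smul, real_inner_smul_left, real_inner_smul_right]
    simp [abs_of_pos, hA, hB]
    field_simp
    ring
  have h2 : ‖a - b‖ ^ 2 = ‖a‖ ^ 2 - 2 * ⟪a, b⟫ + ‖b‖ ^ 2 := by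
    rw [norm_sub_sq_real]
  have key : ‖‖a‖⁻¹ • a - ‖b‖⁻¹ • b‖ ^ 2 ≤ ‖a - b‖ ^ 2 := by
    rw [h1, h2, ← sub_nonneg]
    have expand : ‖a‖ ^ 2 - 2 * ⟪a, b⟫ + ‖b‖ ^ 2 - (2 - 2 * (⟪a, b⟫ / (‖a‖ * ‖b‖)))
        = (‖a‖*‖b‖*(‖a‖^2 + ‖b‖^2 - 2*(‖a‖*‖b‖)) + 2*(‖a‖*‖b‖ - ⟪a,b⟫)*(‖a‖*‖b‖-1)) / (‖a‖*‖b‖) := by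
      field_simp; ring
    rw [expand]
    apply div_nonneg _ (by positivity)
    have hab1 : 1 ≤ ‖a‖ * ‖b‖ := one_le_mul_of_one_le_of_one_le ha hb
    nlinarith [sq_nonneg (‖a‖ - ‖b‖), mul_pos hA hB]
  exact (pow_le_pow_iff_left₀ (norm_nonneg _) (norm_nonneg _) two_ne_zero).mp key

lemma sum_shift {N : ℕ} [NeZero N] (F : Idx N → ℝ) (e : Idx N) :
    ∑ I : Idx N, F (I + e) = ∑ I : Idx N, F I :=
  Fintype.sum_equiv (Equiv.addRight e) _ _ (fun _ => rfl)

lemma sbp_dir {N : ℕ} [NeZero N] (f g : GridFun N) (r : Fin 3) :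
    ∑ I : Idx N, ⟪f I, g (I + Pi.single r 1) - (2:ℝ) • g I + g (I - Pi.single r 1)⟫
      = - ∑ I : Idx N, ⟪f (I + Pi.single r 1) - f I, g (I + Pi.single r 1) - g I⟫ := by
  set e := (Pi.single r 1 : Idx N) with he
  have shift : ∑ I : Idx N, ⟪f I, g I - g (I - e)⟫
      = ∑ I : Idx N, ⟪f (I + e), g (I + e) - g I⟫ := by
    rw [← sum_shift (fun I => ⟪f I, g I - g (I - e)⟫) e]
    simp
  have pt : ∀ I : Idx N, ⟪f I, g (I + e) - (2:ℝ) • g I + g (I - e)⟫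
      = ⟪f I, g (I + e) - g I⟫ - ⟪f I, g I - g (I - e)⟫ := by
    intro I
    rw [← inner_sub_right]
    congr 1
    module
  simp_rw [pt]
  rw [Finset.sum_sub_distrib, shift, ← Finset.sum_sub_distrib, ← Finset.sum_neg_distrib]
  refine Finset.sum_congr rfl (fun I _ => ?_)
  rw [inner_sub_left]
  ring

lemma sbp {N : ℕ} [NeZero N] (h : ℝ) (f g : GridFun N) :
    ∑ I : Idx N, ⟪f I, dlap h g I⟫ = - ∑ I : Idx N, ∑ r : Fin 3, ⟪fd h r f I, fd h r g I⟫ := by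
  have hfd : ∀ (r : Fin 3) (I : Idx N), ⟪fd h r f I, fd h r g I⟫
      = (1/h^2) * ⟪f (I + Pi.single r 1) - f I, g (I + Pi.single r 1) - g I⟫ := by
    intro r I
    rw [fd, fd, real_inner_smul_left, real_inner_smul_right, ← mul_assoc]
    congr 1
    ring
  simp_rw [dlap, inner_sum, real_inner_smul_right, hfd]
  rw [Finset.sum_comm]
  conv_rhs => rw [Finset.sum_comm]
  have step : ∀ r : Fin 3, (∑ I : Idx N, (1/h^2) * ⟪f I, g (I+Pi.single r 1) - (2:ℝ)•g I + g (I-Pi.single r 1)⟫)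
      = -(∑ I : Idx N, (1/h^2) * ⟪f (I+Pi.single r 1) - f I, g (I+Pi.single r 1) - g I⟫) := fun r => by
    have e1 : (∑ I : Idx N, (1/h^2) * ⟪f I, g (I+Pi.single r 1) - (2:ℝ)•g I + g (I-Pi.single r 1)⟫)
        = (1/h^2) * ∑ I : Idx N, ⟪f I, g (I+Pi.single r 1) - (2:ℝ)•g I + g (I-Pi.single r 1)⟫ :=
      (Finset.mul_sum _ _ _).symm
    have e2 : (∑ I : Idx N, (1/h^2) * ⟪f (I+Pi.single r 1) - f I, g (I+Pi.single r 1) - g I⟫)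
        = (1/h^2) * ∑ I : Idx N, ⟪f (I+Pi.single r 1) - f I, g (I+Pi.single r 1) - g I⟫ :=
      (Finset.mul_sum _ _ _).symm
    rw [e1, e2, sbp_dir, mul_neg]
  simp_rw [step, Finset.sum_neg_distrib]

lemma fd_sub {N : ℕ} (h : ℝ) (r : Fin 3) (f g : GridFun N) (I : Idx N) :
    fd h r (fun J => f J - g J) I = fd h r f I - fd h r g I := by
  simp only [fd]
  module

end AuxLemmas

/-- unconditional discrete `H¹` stability of the fully discrete scheme. -/
theorem statement11 (N : ℕ) [NeZero N] (hN : 1 ≤ N) (h Δt β γ : ℝ) (hh : h = 1 / (N : ℝ))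
    (hΔt : 0 < Δt) (hγ : 0 < γ) (n : ℕ) (hn : 1 ≤ n) (m v : ℕ → GridFun N)
    (hm0 : ∀ I, ‖m 0 I‖ = 1)
    (hscheme : ∀ k, 1 ≤ k → k ≤ n → ∀ I : Idx N,
      (1 / Δt) • (v k I - m (k - 1) I)
        = -(β • cross3 (m (k - 1) I) (dlap h (v k) I))
            - γ • cross3 (m (k - 1) I) (cross3 (m (k - 1) I) (dlap h (v k) I)))
    (hproj : ∀ k, 1 ≤ k → k ≤ n → ∀ I : Idx N, m k I = ‖v k I‖⁻¹ • v k I) :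
    (1 / 2) * gradsq h (m n)
        + γ * Δt * ∑ k ∈ Finset.Icc 1 n,
            (h ^ 3 * ∑ I : Idx N, ‖cross3 (m (k - 1) I) (dlap h (v k) I)‖ ^ 2)
      ≤ (1 / 2) * gradsq h (m 0) :=  by
  have hNpos : (0:ℝ) < N := by
    exact_mod_cast Nat.pos_of_ne_zero (NeZero.ne N)
  have hhpos : 0 < h := by rw [hh]; positivity
  have hw : ∀ k, 1 ≤ k → k ≤ n → ∀ I : Idx N,
      v k I - m (k-1) I = Δt • (-(β • cross3 (m (k-1) I) (dlap h (v k) I))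
        - γ • cross3 (m (k-1) I) (cross3 (m (k-1) I) (dlap h (v k) I))) := by
    intro k h1 h2 I
    rw [← hscheme k h1 h2 I, smul_smul, mul_one_div, div_self hΔt.ne', one_smul]
  have horth : ∀ k, 1 ≤ k → k ≤ n → ∀ I, ⟪m (k-1) I, v k I - m (k-1) I⟫ = 0 := by
    intro k h1 h2 I
    rw [hw k h1 h2 I]
    rw [real_inner_smul_right, inner_sub_right, inner_neg_right, real_inner_smul_right,
      real_inner_smul_right, inner_cross3_self, inner_cross3_self]
    ring
  have hvge : ∀ k, 1 ≤ k → k ≤ n → (∀ I, ‖m (k-1) I‖ = 1) → ∀ I, 1 ≤ ‖v k I‖ := by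
    intro k h1 h2 hmk I
    have hv : v k I = m (k-1) I + (v k I - m (k-1) I) := by abel
    have hsq : ‖v k I‖^2 = 1 + ‖v k I - m (k-1) I‖^2 := by
      calc ‖v k I‖^2 = ‖m (k-1) I + (v k I - m (k-1) I)‖^2 := by rw [← hv]
        _ = ‖m (k-1) I‖^2 + 2 * ⟪m (k-1) I, v k I - m (k-1) I⟫ + ‖v k I - m (k-1) I‖^2 :=
            norm_add_sq_real _ _
        _ = 1 + ‖v k I - m (k-1) I‖^2 := by rw [horth k h1 h2 I, hmk I]; ring
    nlinarith [norm_nonneg (v k I), sq_nonneg ‖v k I - m (k-1) I‖]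
  have hm_all : ∀ j, j ≤ n → ∀ I, ‖m j I‖ = 1 := by
    intro j
    induction j with
    | zero => exact fun _ I => hm0 I
    | succ j ih =>
      intro hj I
      have hprev : ∀ I, ‖m ((j+1)-1) I‖ = 1 := by
        simpa using ih (by omega)
      have h1 : 1 ≤ ‖v (j+1) I‖ := hvge (j+1) (by omega) hj hprev I
      rw [hproj (j+1) (by omega) hj I, norm_smul, norm_inv, norm_norm]
      exact inv_mul_cancel₀ (by linarith)
  have hvge' : ∀ k, 1 ≤ k → k ≤ n → ∀ I, 1 ≤ ‖v k I‖ := fun k h1 h2 =>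
    hvge k h1 h2 (fun I => hm_all (k-1) (by omega) I)
  have hpt : ∀ k, 1 ≤ k → k ≤ n → ∀ I : Idx N,
      ⟪v k I - m (k-1) I, dlap h (v k) I⟫
        = Δt * (γ * ‖cross3 (m (k-1) I) (dlap h (v k) I)‖^2) := by
    intro k h1 h2 I
    rw [hw k h1 h2 I, real_inner_smul_left]
    congr 1
    rw [inner_sub_left, inner_neg_left, real_inner_smul_left, real_inner_smul_left,
      inner_cross3_self', inner_cross3_cross, real_inner_self_eq_norm_sq]
    ring
  have hstep : ∀ k, 1 ≤ k → k ≤ n →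
      (1/2) * gradsq h (m k)
          + γ * Δt * (h^3 * ∑ I : Idx N, ‖cross3 (m (k-1) I) (dlap h (v k) I)‖^2)
        ≤ (1/2) * gradsq h (m (k-1)) := by
    intro k h1 h2
    have e1 : ∑ I : Idx N, ⟪v k I - m (k-1) I, dlap h (v k) I⟫
        = Δt * (γ * ∑ I : Idx N, ‖cross3 (m (k-1) I) (dlap h (v k) I)‖^2) := by
      simp_rw [hpt k h1 h2]
      simp only [Finset.mul_sum]
    have e2 := sbp h (fun J => v k J - m (k-1) J) (v k)
    simp only [fd_sub] at e2
    have key : ∑ I : Idx N, ∑ r : Fin 3,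
        ⟪fd h r (v k) I - fd h r (m (k-1)) I, fd h r (v k) I⟫
          = -(Δt * (γ * ∑ I : Idx N, ‖cross3 (m (k-1) I) (dlap h (v k) I)‖^2)) := by
      rw [e1] at e2
      linarith
    have pt2 : ∀ (x y : E3), (‖x‖^2 - ‖y‖^2) / 2 ≤ ⟪x - y, x⟫ := by
      intro x y
      have i1 : ‖x - y‖^2 = ‖x‖^2 - 2*⟪x,y⟫ + ‖y‖^2 := norm_sub_sq_real x y
      have i2 : ⟪x - y, x⟫ = ‖x‖^2 - ⟪x,y⟫ := by
        rw [inner_sub_left, real_inner_self_eq_norm_sq, real_inner_comm]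
      nlinarith [sq_nonneg ‖x - y‖]
    have hsplit : (∑ I : Idx N, ∑ r : Fin 3, ‖fd h r (v k) I‖^2)
        - (∑ I : Idx N, ∑ r : Fin 3, ‖fd h r (m (k-1)) I‖^2)
        = ∑ I : Idx N, ∑ r : Fin 3, (‖fd h r (v k) I‖^2 - ‖fd h r (m (k-1)) I‖^2) := by
      rw [← Finset.sum_sub_distrib]
      exact Finset.sum_congr rfl fun I _ => (Finset.sum_sub_distrib _ _).symm
    have hle : ((∑ I : Idx N, ∑ r : Fin 3, ‖fd h r (v k) I‖^2)
        - (∑ I : Idx N, ∑ r : Fin 3, ‖fd h r (m (k-1)) I‖^2)) / 2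
        ≤ -(Δt * (γ * ∑ I : Idx N, ‖cross3 (m (k-1) I) (dlap h (v k) I)‖^2)) := by
      rw [← key, hsplit, Finset.sum_div]
      refine Finset.sum_le_sum fun I _ => ?_
      rw [Finset.sum_div]
      exact Finset.sum_le_sum fun r _ => pt2 _ _
    have hC : (∑ I : Idx N, ∑ r : Fin 3, ‖fd h r (m k) I‖^2)
        ≤ ∑ I : Idx N, ∑ r : Fin 3, ‖fd h r (v k) I‖^2 := by
      refine Finset.sum_le_sum fun I _ => Finset.sum_le_sum fun r _ => ?_
      have hnorm : ‖fd h r (m k) I‖ ≤ ‖fd h r (v k) I‖ := by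
        rw [fd, fd, norm_smul, norm_smul]
        refine mul_le_mul_of_nonneg_left ?_ (norm_nonneg _)
        rw [hproj k h1 h2, hproj k h1 h2]
        exact proj_lip _ _ (hvge' k h1 h2 _) (hvge' k h1 h2 _)
      exact pow_le_pow_left₀ (norm_nonneg _) hnorm 2
    have hmain : (∑ I : Idx N, ∑ r : Fin 3, ‖fd h r (m k) I‖^2) / 2
        + Δt * (γ * ∑ I : Idx N, ‖cross3 (m (k-1) I) (dlap h (v k) I)‖^2)
        ≤ (∑ I : Idx N, ∑ r : Fin 3, ‖fd h r (m (k-1)) I‖^2) / 2 := by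
      linarith
    have hmul := mul_le_mul_of_nonneg_left hmain (le_of_lt (pow_pos hhpos 3))
    rw [gradsq, gradsq]
    nlinarith [hmul]
  have main : ∀ j, j ≤ n →
      (1/2) * gradsq h (m j) + γ * Δt * ∑ k ∈ Finset.Icc 1 j,
          (h ^ 3 * ∑ I : Idx N, ‖cross3 (m (k - 1) I) (dlap h (v k) I)‖ ^ 2)
        ≤ (1/2) * gradsq h (m 0) := by
    intro j
    induction j with
    | zero => intro _; simp
    | succ j ih =>
      intro hj
      rw [Finset.sum_Icc_succ_top (by omega : 1 ≤ j+1)]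
      have hs := hstep (j+1) (by omega) hj
      have hih := ih (by omega)
      simp only [Nat.add_sub_cancel] at hs ⊢
      nlinarith [hs, hih]
  exact main n le_rfl
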